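/- arXiv:2403.07411 — 3 statements merged into one kernel-verified Lean document; each statement's English description precedes it below -/
import Mathlib

section
/- (Kolountzakis) Let d ≥ 1, let A ∈ ℝ^{d×d} be nonsingular, and suppose there exists Φ ⊆ Aℤ^d such that ([0,1)^d, Φ) is a tiling of ℝ^d. Then |det A| = 1/N for some natural number N ≥ 1. -/
open MeasureTheory
open scoped ENNReal

noncomputable section

/-- The half-open unit cube `[0,1)^d` in `ℝ^d`. -/
def cube (d : ℕ) : Set (Fin d → ℝ) := {x | ∀ i, 0 ≤ x i ∧ x i < 1}

/-- `(S, Φ)` is a tiling of `ℝ^d`: every point lies in exactly one translate `S + φ`, `φ ∈ Φ`. -/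
def IsTiling {d : ℕ} (S Φ : Set (Fin d → ℝ)) : Prop :=
  ∀ x : Fin d → ℝ, ∃! φ, φ ∈ Φ ∧ x - φ ∈ S

/-- The lattice `C ℤ^d` generated by the columns of the matrix `C`. -/
def latticeOf {d : ℕ} (C : Matrix (Fin d) (Fin d) ℝ) : Set (Fin d → ℝ) :=
  {v | ∃ k : Fin d → ℤ, v = C.mulVec fun i => (k i : ℝ)}

/-- A 0–1 matrix with exactly one `1` in each row and column. -/
def IsPermMatrix {d : ℕ} (P : Matrix (Fin d) (Fin d) ℝ) : Prop :=
  ∃ σ : Equiv.Perm (Fin d), ∀ i j, P i j = if σ j = i then 1 else 0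

def IsLowerUnitriangular {d : ℕ} (G : Matrix (Fin d) (Fin d) ℝ) : Prop :=
  (∀ i, G i i = 1) ∧ ∀ i j : Fin d, i < j → G i j = 0

def IsUpperUnitriangular {d : ℕ} (G : Matrix (Fin d) (Fin d) ℝ) : Prop :=
  (∀ i, G i i = 1) ∧ ∀ i j : Fin d, j < i → G i j = 0

/-- Unitriangular: (lower or upper) triangular with all diagonal entries `1`. -/
def IsUnitriangular {d : ℕ} (G : Matrix (Fin d) (Fin d) ℝ) : Prop :=
  IsLowerUnitriangular G ∨ IsUpperUnitriangular G

namespace Stmt6Aux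

open Matrix

variable {d : ℕ}

/-- The half-open box `(z-1, z]`. -/
def Box (z : Fin d → ℝ) : Set (Fin d → ℝ) := Set.univ.pi fun i => Set.Ioc (z i - 1) (z i)

lemma mem_Box {z v : Fin d → ℝ} : v ∈ Box z ↔ ∀ i, z i - 1 < v i ∧ v i ≤ z i := by
  simp [Box, Set.mem_pi]

lemma Box_measurable (z : Fin d → ℝ) : MeasurableSet (Box z) :=
  MeasurableSet.univ_pi fun i => measurableSet_Ioc

lemma Box_volume (z : Fin d → ℝ) : volume (Box z) = 1 := by
  rw [Box, volume_pi_pi]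
  simp [Real.volume_Ioc]

lemma mem_Box_sub {z u v : Fin d → ℝ} : v ∈ Box z ↔ v - u ∈ Box (z - u) := by
  rw [mem_Box, mem_Box]
  constructor <;> intro h i <;> have := h i <;>
    simp only [Pi.sub_apply] at * <;> constructor <;> linarith [this.1, this.2]

lemma mem_Box_swap {z u v : Fin d → ℝ} : v ∈ Box (z - u) ↔ u ∈ Box (z - v) := by
  rw [mem_Box, mem_Box]
  constructor <;> intro h i <;> have := h i <;>
    simp only [Pi.sub_apply] at * <;> constructor <;> linarith [this.1, this.2]

/-- Tiling restated: each half-open box contains exactly one point of `Φ`. -/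
lemma tiling_box {Φ : Set (Fin d → ℝ)} (hT : IsTiling (cube d) Φ) (z : Fin d → ℝ) :
    ∃! φ, φ ∈ Φ ∧ φ ∈ Box z := by
  obtain ⟨φ, ⟨h1, h2⟩, hu⟩ := hT z
  refine ⟨φ, ⟨h1, mem_Box.2 fun i => ?_⟩, fun ψ hψ => ?_⟩
  · have h2i := h2 i
    simp only [Pi.sub_apply] at h2i
    exact ⟨by linarith [h2i.2], by linarith [h2i.1]⟩
  · refine hu ψ ⟨hψ.1, fun i => ?_⟩
    have := mem_Box.1 hψ.2 i
    simp only [Pi.sub_apply]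
    exact ⟨by linarith [this.2], by linarith [this.1]⟩

lemma castVec_sub (k m : Fin d → ℤ) :
    (fun i => ((k - m) i : ℝ)) = (fun i => (k i : ℝ)) - fun i => (m i : ℝ) := by
  funext i
  simp [Pi.sub_apply]

lemma mulVec_inj {A : Matrix (Fin d) (Fin d) ℝ} (hA : A.det ≠ 0) {u v : Fin d → ℝ}
    (h : A.mulVec u = A.mulVec v) : u = v := by
  have hinv := A.nonsing_inv_mul (isUnit_iff_ne_zero.2 hA)
  calc u = (A⁻¹ * A).mulVec u := by rw [hinv, one_mulVec]
    _ = A⁻¹.mulVec (A.mulVec u) := (mulVec_mulVec u A⁻¹ A).symm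
    _ = A⁻¹.mulVec (A.mulVec v) := by rw [h]
    _ = (A⁻¹ * A).mulVec v := mulVec_mulVec v A⁻¹ A
    _ = v := by rw [hinv, one_mulVec]

lemma inv_mulVec_mulVec {A : Matrix (Fin d) (Fin d) ℝ} (hA : A.det ≠ 0) (v : Fin d → ℝ) :
    A⁻¹.mulVec (A.mulVec v) = v := by
  rw [mulVec_mulVec, A.nonsing_inv_mul (isUnit_iff_ne_zero.2 hA), one_mulVec]

/-- Integer points whose lattice image lies in the box `(z-1,z]`. -/
def Kset (A : Matrix (Fin d) (Fin d) ℝ) (z : Fin d → ℝ) : Set (Fin d → ℤ) :=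
  {k | A.mulVec (fun i => (k i : ℝ)) ∈ Box z}

lemma Kset_finite (A : Matrix (Fin d) (Fin d) ℝ) (hA : A.det ≠ 0) (z : Fin d → ℝ) :
    (Kset A z).Finite := by
  set R : Fin d → ℤ := fun i => ⌈∑ j, |A⁻¹ i j| * (|z j| + 1)⌉ with hR
  apply Set.Finite.subset (Set.Finite.pi (t := fun i => Set.Icc (-(R i)) (R i))
    (fun i => Set.finite_Icc _ _))
  intro k hk
  simp only [Set.mem_pi, Set.mem_univ, forall_true_left, Set.mem_Icc]
  intro i
  set v := A.mulVec (fun i => (k i : ℝ)) with hv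
  have hb := mem_Box.1 hk
  have hvb : ∀ j, |v j| ≤ |z j| + 1 := by
    intro j
    rcases hb j with ⟨h1, h2⟩
    rw [abs_le]
    constructor
    · have := neg_abs_le (z j); linarith
    · have := le_abs_self (z j); linarith
  have hki : ((k i : ℝ)) = ∑ j, A⁻¹ i j * v j := by
    have h1 : A⁻¹.mulVec v = fun i => (k i : ℝ) := inv_mulVec_mulVec hA _
    have h2 := congrFun h1 i
    rw [← h2]
    simp [Matrix.mulVec, dotProduct]
  have habs : |(k i : ℝ)| ≤ ∑ j, |A⁻¹ i j| * (|z j| + 1) := by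
    rw [hki]
    refine le_trans (Finset.abs_sum_le_sum_abs _ _) (Finset.sum_le_sum fun j _ => ?_)
    rw [abs_mul]
    exact mul_le_mul_of_nonneg_left (hvb j) (abs_nonneg _)
  have hceil : (∑ j, |A⁻¹ i j| * (|z j| + 1)) ≤ (R i : ℝ) := Int.le_ceil _
  constructor
  · have : -(R i : ℝ) ≤ (k i : ℝ) := by
      have := neg_abs_le ((k i : ℝ)); linarith
    exact_mod_cast this
  · have : ((k i : ℝ)) ≤ (R i : ℝ) := le_trans (le_abs_self _) (le_trans habs hceil)
    exact_mod_cast this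

section Tiling

variable {A : Matrix (Fin d) (Fin d) ℝ} {Φ : Set (Fin d → ℝ)}

/-- The key constancy lemma: all boxes contain the same number of lattice points. -/
lemma Kset_card_const (hA : A.det ≠ 0) (hΦ : Φ ⊆ latticeOf A) (hT : IsTiling (cube d) Φ)
    (x y : Fin d → ℝ) : Nat.card (Kset A x) = Nat.card (Kset A y) := by
  choose t htp htu using fun z => tiling_box hT z
  choose m hm using fun z => hΦ (htp z).1
  -- the transfer map
  have step : ∀ (x y : Fin d → ℝ), ∀ k ∈ Kset A x,
      (m (y + A.mulVec fun i => (k i : ℝ)) - k) ∈ Kset A y := by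
    intro x y k hk
    set w := y + A.mulVec fun i => (k i : ℝ) with hw
    show A.mulVec (fun i => ((m w - k) i : ℝ)) ∈ Box y
    rw [castVec_sub, mulVec_sub, ← hm w]
    have h1 : t w ∈ Box w := (htp w).2
    have h2 := (mem_Box_sub (u := A.mulVec fun i => (k i : ℝ))).1 h1
    rwa [hw, add_sub_cancel_right] at h2
  have inv_step : ∀ (x y : Fin d → ℝ), ∀ k ∈ Kset A x,
      m (x + A.mulVec fun i => ((m (y + A.mulVec fun i => (k i : ℝ)) - k) i : ℝ))
        - (m (y + A.mulVec fun i => (k i : ℝ)) - k) = k := by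
    intro x y k hk
    set w := y + A.mulVec fun i => (k i : ℝ) with hw
    set u := A.mulVec fun i => ((m w - k) i : ℝ) with hu
    have hu' : u = t w - A.mulVec fun i => (k i : ℝ) := by
      rw [hu, castVec_sub, mulVec_sub, ← hm w]
    set w' := x + u with hw'
    have htw' : t w' = t w := by
      refine (htu w' (t w) ⟨(htp w).1, ?_⟩).symm
      have hwx : w' - u = x := by rw [hw', add_sub_cancel_right]
      have h3 : t w - u ∈ Box (w' - u) := by
        rw [hwx, hu', sub_sub_cancel]
        exact hk
      exact (mem_Box_sub (u := u)).2 h3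
    have hmm : m w' = m w := by
      have : A.mulVec (fun i => (m w' i : ℝ)) = A.mulVec (fun i => (m w i : ℝ)) := by
        rw [← hm w', ← hm w, htw']
      have h4 := mulVec_inj hA this
      funext i
      have := congrFun h4 i
      exact_mod_cast this
    rw [hmm, sub_sub_cancel]
  refine Nat.card_congr ⟨fun k => ⟨_, step x y k.1 k.2⟩, fun k => ⟨_, step y x k.1 k.2⟩,
    fun k => ?_, fun k => ?_⟩
  · exact Subtype.ext (inv_step x y k.1 k.2)
  · exact Subtype.ext (inv_step y x k.1 k.2)

lemma Kset_nonempty (hΦ : Φ ⊆ latticeOf A) (hT : IsTiling (cube d) Φ) (z : Fin d → ℝ) :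
    (Kset A z).Nonempty := by
  obtain ⟨φ, ⟨h1, h2⟩, _⟩ := tiling_box hT z
  obtain ⟨k, hk⟩ := hΦ h1
  exact ⟨k, by rw [Kset, Set.mem_setOf_eq, ← hk]; exact h2⟩

end Tiling

lemma tsum_card {S : Set (Fin d → ℤ)} (hS : S.Finite) :
    ∑' k : Fin d → ℤ, S.indicator (fun _ => (1 : ℝ≥0∞)) k = Nat.card S := by
  have h1 : ∑' k : Fin d → ℤ, S.indicator (fun _ => (1 : ℝ≥0∞)) k
      = ∑ k ∈ hS.toFinset, S.indicator (fun _ => (1 : ℝ≥0∞)) k :=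
    tsum_eq_sum (fun k hk =>
      Set.indicator_of_notMem (fun hmem => hk (hS.mem_toFinset.2 hmem)) _)
  have h2 : ∀ k ∈ hS.toFinset, S.indicator (fun _ => (1 : ℝ≥0∞)) k = 1 := fun k hk =>
    Set.indicator_of_mem (hS.mem_toFinset.1 hk) _
  rw [h1, Finset.sum_congr rfl h2, Finset.sum_const, nsmul_eq_mul, mul_one,
    Nat.card_coe_set_eq, Set.ncard_eq_toFinset_card S hS]

section Measure

variable {A : Matrix (Fin d) (Fin d) ℝ} {Φ : Set (Fin d → ℝ)}

lemma cube_eq (d : ℕ) : cube d = Set.univ.pi fun _ : Fin d => Set.Ico (0:ℝ) 1 := by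
  ext x; simp [cube, Set.mem_pi]

lemma cube_measurable : MeasurableSet (cube d) := by
  rw [cube_eq]; exact MeasurableSet.univ_pi fun i => measurableSet_Ico

lemma cube_volume (d : ℕ) : volume (cube d) = 1 := by
  rw [cube_eq, volume_pi_pi]; simp [Real.volume_Ico]

/-- The fundamental domain `A [0,1)^d` of the lattice. -/
def T0 (A : Matrix (Fin d) (Fin d) ℝ) : Set (Fin d → ℝ) := {x | A⁻¹.mulVec x ∈ cube d}

lemma T0_eq : T0 A = ⇑(Matrix.toLin' A⁻¹) ⁻¹' (cube d) := by
  ext x; simp [T0, Matrix.toLin'_apply]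

lemma T0_measurable : MeasurableSet (T0 A) := by
  rw [T0_eq]
  exact (LinearMap.continuous_of_finiteDimensional _).measurable cube_measurable

lemma T0_volume (hA : A.det ≠ 0) : volume (T0 A) = ENNReal.ofReal |A.det| := by
  rw [T0_eq]
  have hdet : LinearMap.det (Matrix.toLin' A⁻¹) ≠ 0 := by
    rw [LinearMap.det_toLin', Matrix.det_nonsing_inv, Ring.inverse_eq_inv']
    exact inv_ne_zero hA
  rw [MeasureTheory.Measure.addHaar_preimage_linearMap volume hdet, cube_volume, mul_one,
    LinearMap.det_toLin', Matrix.det_nonsing_inv, Ring.inverse_eq_inv', inv_inv]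

/-- Lattice translate of the fundamental domain. -/
def Tk (A : Matrix (Fin d) (Fin d) ℝ) (k : Fin d → ℤ) : Set (Fin d → ℝ) :=
  {x | x - A.mulVec (fun i => (k i : ℝ)) ∈ T0 A}

lemma mem_Tk (hA : A.det ≠ 0) (k : Fin d → ℤ) (x : Fin d → ℝ) :
    x ∈ Tk A k ↔ ∀ i, ⌊(A⁻¹.mulVec x) i⌋ = k i := by
  show x - A.mulVec (fun i => (k i : ℝ)) ∈ T0 A ↔ _
  show A⁻¹.mulVec (x - A.mulVec fun i => (k i : ℝ)) ∈ cube d ↔ _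
  rw [mulVec_sub, inv_mulVec_mulVec hA]
  constructor
  · intro h i
    have hi := h i
    simp only [Pi.sub_apply] at hi
    rw [Int.floor_eq_iff]
    exact ⟨by linarith [hi.1], by linarith [hi.2]⟩
  · intro h i
    have hi := h i
    rw [Int.floor_eq_iff] at hi
    simp only [Pi.sub_apply]
    exact ⟨by linarith [hi.1], by linarith [hi.2]⟩

lemma Tk_measurable (A : Matrix (Fin d) (Fin d) ℝ) (k : Fin d → ℤ) :
    MeasurableSet (Tk A k) := by
  have : Tk A k = (fun x => x - A.mulVec (fun i => (k i : ℝ))) ⁻¹' (T0 A) := rfl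
  rw [this]
  exact (measurable_id.sub measurable_const) T0_measurable

lemma Tk_inter_vol (z : Fin d → ℝ) (k : Fin d → ℤ) :
    volume (Box z ∩ Tk A k)
      = volume (Box (z - A.mulVec fun i => (k i : ℝ)) ∩ T0 A) := by
  set c := A.mulVec fun i => (k i : ℝ) with hc
  have hpre : (fun x => x + c) ⁻¹' (Box z ∩ Tk A k) = Box (z - c) ∩ T0 A := by
    ext x
    simp only [Set.mem_preimage, Set.mem_inter_iff]
    constructor
    · rintro ⟨h1, h2⟩
      refine ⟨?_, ?_⟩
      · have h3 := (mem_Box_sub (u := c)).1 h1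
        rwa [add_sub_cancel_right] at h3
      · have h3 : x + c - c ∈ T0 A := h2
        rwa [add_sub_cancel_right] at h3
    · rintro ⟨h1, h2⟩
      refine ⟨?_, ?_⟩
      · rw [mem_Box_sub (u := c), add_sub_cancel_right]
        exact h1
      · show x + c - c ∈ T0 A
        rwa [add_sub_cancel_right]
  rw [← hpre, measure_preimage_add_right]

/-- The central identity: `N · |det A| = 1`. -/
lemma key_identity (hA : A.det ≠ 0) (hΦ : Φ ⊆ latticeOf A) (hT : IsTiling (cube d) Φ) :
    (Nat.card (Kset A (0 : Fin d → ℝ)) : ℝ≥0∞) * ENNReal.ofReal |A.det| = 1 := by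
  classical
  set N : ℕ := Nat.card (Kset A (0 : Fin d → ℝ)) with hN
  have hcover : Box (0 : Fin d → ℝ) = ⋃ k : Fin d → ℤ, (Box (0 : Fin d → ℝ) ∩ Tk A k) := by
    ext x
    simp only [Set.mem_iUnion, Set.mem_inter_iff]
    constructor
    · intro hx
      refine ⟨fun i => ⌊(A⁻¹.mulVec x) i⌋, hx, ?_⟩
      exact (mem_Tk hA _ x).2 fun i => rfl
    · rintro ⟨k, hk, -⟩
      exact hk
  have hdisj : Pairwise (Function.onFun Disjoint fun k : Fin d → ℤ => Box (0 : Fin d → ℝ) ∩ Tk A k) := by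
    intro k m hkm
    simp only [Function.onFun]
    rw [Set.disjoint_left]
    rintro x ⟨-, h1⟩ ⟨-, h2⟩
    exact hkm (funext fun i => ((mem_Tk hA k x).1 h1 i).symm.trans ((mem_Tk hA m x).1 h2 i))
  have hmeas : ∀ k : Fin d → ℤ, MeasurableSet (Box (0 : Fin d → ℝ) ∩ Tk A k) :=
    fun k => (Box_measurable _).inter (Tk_measurable A k)
  have h1 : (1 : ℝ≥0∞) = ∑' k : Fin d → ℤ, volume (Box (0 : Fin d → ℝ) ∩ Tk A k) := by
    conv_lhs => rw [← Box_volume (0 : Fin d → ℝ), hcover]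
    exact measure_iUnion hdisj hmeas
  have h2 : ∀ k : Fin d → ℤ, volume (Box (0 : Fin d → ℝ) ∩ Tk A k)
      = ∫⁻ x, ((Box ((0 : Fin d → ℝ) - A.mulVec fun i => (k i : ℝ)) ∩ T0 A).indicator
          (fun _ => (1 : ℝ≥0∞))) x := by
    intro k
    rw [Tk_inter_vol, lintegral_indicator_const ((Box_measurable _).inter T0_measurable),
      one_mul]
  have h4 : ∀ x : Fin d → ℝ,
      (∑' k : Fin d → ℤ, ((Box ((0 : Fin d → ℝ) - A.mulVec fun i => (k i : ℝ)) ∩ T0 A).indicator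
          (fun _ => (1 : ℝ≥0∞))) x)
        = (T0 A).indicator (fun _ => (N : ℝ≥0∞)) x := by
    intro x
    by_cases hx : x ∈ T0 A
    · rw [Set.indicator_of_mem hx]
      have hcong : ∀ k : Fin d → ℤ,
          ((Box ((0 : Fin d → ℝ) - A.mulVec fun i => (k i : ℝ)) ∩ T0 A).indicator
            (fun _ => (1 : ℝ≥0∞))) x
          = (Kset A ((0 : Fin d → ℝ) - x)).indicator (fun _ => (1 : ℝ≥0∞)) k := by
        intro k
        by_cases hk : x ∈ Box ((0 : Fin d → ℝ) - A.mulVec fun i => (k i : ℝ))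
        · rw [Set.indicator_of_mem
              (show x ∈ Box ((0 : Fin d → ℝ) - A.mulVec fun i => (k i : ℝ)) ∩ T0 A from ⟨hk, hx⟩),
            Set.indicator_of_mem
              (show k ∈ Kset A ((0 : Fin d → ℝ) - x) from mem_Box_swap.1 hk)]
        · rw [Set.indicator_of_notMem
              (show x ∉ Box ((0 : Fin d → ℝ) - A.mulVec fun i => (k i : ℝ)) ∩ T0 A from
                fun hmem => hk hmem.1),
            Set.indicator_of_notMem
              (show k ∉ Kset A ((0 : Fin d → ℝ) - x) from fun hmem => hk (mem_Box_swap.2 hmem))]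
      rw [tsum_congr hcong, tsum_card (Kset_finite A hA _),
        Kset_card_const hA hΦ hT ((0 : Fin d → ℝ) - x) (0 : Fin d → ℝ)]
    · rw [Set.indicator_of_notMem hx]
      have hz : ∀ k : Fin d → ℤ,
          ((Box ((0 : Fin d → ℝ) - A.mulVec fun i => (k i : ℝ)) ∩ T0 A).indicator
            (fun _ => (1 : ℝ≥0∞))) x = 0 := fun k =>
        Set.indicator_of_notMem
          (show x ∉ Box ((0 : Fin d → ℝ) - A.mulVec fun i => (k i : ℝ)) ∩ T0 A from
            fun hmem => hx hmem.2) _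
      rw [tsum_congr hz]
      exact tsum_zero
  have h5 : (1 : ℝ≥0∞) = (N : ℝ≥0∞) * volume (T0 A) := by
    calc (1 : ℝ≥0∞) = ∑' k : Fin d → ℤ, volume (Box (0 : Fin d → ℝ) ∩ Tk A k) := h1
      _ = ∑' k : Fin d → ℤ, ∫⁻ x, ((Box ((0 : Fin d → ℝ) - A.mulVec fun i => (k i : ℝ)) ∩ T0 A).indicator
            (fun _ => (1 : ℝ≥0∞))) x := tsum_congr h2
      _ = ∫⁻ x, ∑' k : Fin d → ℤ, ((Box ((0 : Fin d → ℝ) - A.mulVec fun i => (k i : ℝ)) ∩ T0 A).indicator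
            (fun _ => (1 : ℝ≥0∞))) x := (lintegral_tsum fun k =>
              ((measurable_const.indicator ((Box_measurable _).inter T0_measurable)).aemeasurable)).symm
      _ = ∫⁻ x, (T0 A).indicator (fun _ => (N : ℝ≥0∞)) x := by
            exact lintegral_congr h4
      _ = (N : ℝ≥0∞) * volume (T0 A) := lintegral_indicator_const T0_measurable _
  rw [T0_volume hA] at h5
  exact h5.symm

end Measure

end Stmt6Aux

/-- Kolountzakis: if some `Φ ⊆ A ℤ^d` tiles with the unit cube, then `|det A| = 1/N` for some
natural number `N ≥ 1`. -/
theorem stmt6 (d : ℕ) (hd : 1 ≤ d) (A : Matrix (Fin d) (Fin d) ℝ) (hA : A.det ≠ 0)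
    (h : ∃ Φ : Set (Fin d → ℝ), Φ ⊆ latticeOf A ∧ IsTiling (cube d) Φ) :
    ∃ N : ℕ, 1 ≤ N ∧ |A.det| = 1 / (N : ℝ) := by
  obtain ⟨Φ, hΦ, hT⟩ := h
  have hkey := Stmt6Aux.key_identity hA hΦ hT
  set N := Nat.card (Stmt6Aux.Kset A (0 : Fin d → ℝ)) with hNdef
  have hfin := Stmt6Aux.Kset_finite A hA (0 : Fin d → ℝ)
  have hne := Stmt6Aux.Kset_nonempty hΦ hT (0 : Fin d → ℝ)
  have hNpos : 0 < N := by
    rw [hNdef, Nat.card_coe_set_eq]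
    exact (Set.ncard_pos hfin).2 hne
  refine ⟨N, hNpos, ?_⟩
  have hN0 : (N : ℝ≥0∞) ≠ 0 := by exact_mod_cast hNpos.ne'
  have hNtop : (N : ℝ≥0∞) ≠ ⊤ := ENNReal.natCast_ne_top N
  have h2 : ENNReal.ofReal |A.det| = ((N : ℝ≥0∞))⁻¹ := by
    have h3 := congrArg (fun t => ((N : ℝ≥0∞))⁻¹ * t) hkey
    rwa [← mul_assoc, ENNReal.inv_mul_cancel hN0 hNtop, one_mul, mul_one] at h3
  have h4 : ((N : ℝ≥0∞))⁻¹ = ENNReal.ofReal ((N : ℝ))⁻¹ := by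
    rw [← ENNReal.ofReal_natCast N, ENNReal.ofReal_inv_of_pos (by exact_mod_cast hNpos)]
  rw [h4] at h2
  have h5 := (ENNReal.ofReal_eq_ofReal_iff (abs_nonneg _) (by positivity)).1 h2
  rw [h5, one_div]


end
end

section
/- Let d ≥ 1 and let A, B ∈ ℝ^{d×d} be nonsingular. Then the following are equivalent: (ii) there exist a permutation matrix P ∈ {0,1}^{d×d} and a nonsingular integer matrix R ∈ ℤ^{d×d} such that P Bᵀ A R is unitriangular; (ii') there exist a nonsingular integer matrix R ∈ ℤ^{d×d} and a unitriangular matrix G ∈ ℝ^{d×d} such that B[0,1)^d = A^{−T} R^{−1} G [0,1)^d as subsets of ℝ^d. -/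
open MeasureTheory Matrix
open scoped ENNReal

noncomputable section

lemma IsUnitriangular.transpose {d : ℕ} {G : Matrix (Fin d) (Fin d) ℝ}
    (h : IsUnitriangular G) : IsUnitriangular Gᵀ := by
  rcases h with ⟨h1, h2⟩ | ⟨h1, h2⟩
  · exact Or.inr ⟨h1, fun i j hij => h2 j i hij⟩
  · exact Or.inl ⟨h1, fun i j hij => h2 j i hij⟩

lemma IsUnitriangular.det_eq_one {d : ℕ} {G : Matrix (Fin d) (Fin d) ℝ}
    (h : IsUnitriangular G) : G.det = 1 := by
  rcases h with ⟨h1, h2⟩ | ⟨h1, h2⟩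
  · rw [Matrix.det_of_lowerTriangular G (fun i j hij => h2 i j hij)]
    simp [h1]
  · rw [Matrix.det_of_upperTriangular (fun i j hij => h2 i j hij)]
    simp [h1]

lemma permMatrix_mulVec {d : ℕ} {P : Matrix (Fin d) (Fin d) ℝ} {σ : Equiv.Perm (Fin d)}
    (hP : ∀ i j, P i j = if σ j = i then 1 else 0) (x : Fin d → ℝ) :
    P.mulVec x = fun i => x (σ.symm i) := by
  funext i
  simp only [Matrix.mulVec, dotProduct, hP]
  rw [Finset.sum_eq_single (σ.symm i)]
  · simp
  · intro j _ hj
    rw [if_neg, zero_mul]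
    intro hc; exact hj (by simpa using congrArg σ.symm hc)
  · simp

lemma permMatrix_image_cube {d : ℕ} {P : Matrix (Fin d) (Fin d) ℝ} {σ : Equiv.Perm (Fin d)}
    (hP : ∀ i j, P i j = if σ j = i then 1 else 0) :
    P.mulVec '' cube d = cube d := by
  ext y
  constructor
  · rintro ⟨x, hx, rfl⟩
    rw [permMatrix_mulVec hP]
    intro i; exact hx (σ.symm i)
  · intro hy
    refine ⟨fun j => y (σ j), fun j => hy (σ j), ?_⟩
    rw [permMatrix_mulVec hP]
    funext i; simp

lemma permMatrix_mul_transpose {d : ℕ} {P : Matrix (Fin d) (Fin d) ℝ} {σ : Equiv.Perm (Fin d)}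
    (hP : ∀ i j, P i j = if σ j = i then 1 else 0) : P * Pᵀ = 1 := by
  ext i j
  simp only [Matrix.mul_apply, Matrix.transpose_apply, hP]
  rw [Finset.sum_eq_single (σ.symm i)]
  · simp [Matrix.one_apply]
  · intro k _ hk
    rw [if_neg (fun hc => hk (by simpa using congrArg σ.symm hc)), zero_mul]
  · simp

lemma permMatrix_transpose_mul {d : ℕ} {P : Matrix (Fin d) (Fin d) ℝ} {σ : Equiv.Perm (Fin d)}
    (hP : ∀ i j, P i j = if σ j = i then 1 else 0) : Pᵀ * P = 1 := by
  ext i j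
  simp only [Matrix.mul_apply, Matrix.transpose_apply, hP]
  rw [Finset.sum_eq_single (σ i)]
  · simp [Matrix.one_apply, Equiv.apply_eq_iff_eq, eq_comm]
  · intro k _ hk
    rw [if_neg (fun hc => hk hc.symm), zero_mul]
  · simp

lemma entries_bounds {d : ℕ} {D : Matrix (Fin d) (Fin d) ℝ}
    (h : ∀ x ∈ cube d, D.mulVec x ∈ cube d) (i j : Fin d) :
    0 ≤ D i j ∧ D i j ≤ 1 := by
  have key : ∀ t : ℝ, 0 ≤ t → t < 1 → 0 ≤ D i j * t ∧ D i j * t < 1 := by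
    intro t ht0 ht1
    set x : Fin d → ℝ := fun k => if k = j then t else 0 with hx
    have hxc : x ∈ cube d := by
      intro k
      simp only [hx]
      split <;> constructor <;> linarith
    have hmv : D.mulVec x i = D i j * t := by
      simp only [Matrix.mulVec, dotProduct, hx]
      rw [Finset.sum_eq_single j]
      · simp
      · intro k _ hk; simp [hk]
      · simp
    have := h x hxc i
    rw [hmv] at this
    exact this
  constructor
  · have := (key (1/2) (by norm_num) (by norm_num)).1
    linarith
  · by_contra hgt
    push_neg at hgt
    have h1 : (0:ℝ) < 1 / D i j := by positivity
    have h2 : 1 / D i j < 1 := by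
      rw [div_lt_one (by linarith)]; linarith
    have := (key (1 / D i j) (le_of_lt h1) h2).2
    rw [mul_one_div, div_self (by linarith)] at this
    linarith

lemma perm_of_cube_eq {d : ℕ} {C : Matrix (Fin d) (Fin d) ℝ} (hC : C.det ≠ 0)
    (h : C.mulVec '' cube d = cube d) : IsPermMatrix C := by
  have hCu : IsUnit C.det := isUnit_iff_ne_zero.mpr hC
  set D := C⁻¹ with hD
  have hCD : C * D = 1 := Matrix.mul_nonsing_inv C hCu
  have hDC : D * C = 1 := Matrix.nonsing_inv_mul C hCu
  have hCin : ∀ x ∈ cube d, C.mulVec x ∈ cube d := fun x hx => h ▸ ⟨x, hx, rfl⟩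
  have hDin : ∀ y ∈ cube d, D.mulVec y ∈ cube d := by
    intro y hy
    rw [← h] at hy
    obtain ⟨x, hx, rfl⟩ := hy
    rw [Matrix.mulVec_mulVec, hDC, Matrix.one_mulVec]
    exact hx
  have hCb := entries_bounds hCin
  have hDb := entries_bounds hDin
  -- each diagonal entry of D*C gives a positive product
  have hdiag : ∀ j : Fin d, ∑ m, D j m * C m j = 1 := by
    intro j
    have := congrFun (congrFun hDC j) j
    rw [Matrix.mul_apply] at this
    simpa using this
  have hoff : ∀ k j : Fin d, k ≠ j → ∀ m, D k m * C m j = 0 := by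
    intro k j hkj m
    have hsum : ∑ m, D k m * C m j = 0 := by
      have := congrFun (congrFun hDC k) j
      rw [Matrix.mul_apply] at this
      rw [this, Matrix.one_apply_ne hkj]
    have hnn : ∀ m ∈ Finset.univ, 0 ≤ D k m * C m j :=
      fun m _ => mul_nonneg (hDb k m).1 (hCb m j).1
    exact (Finset.sum_eq_zero_iff_of_nonneg hnn).mp hsum m (Finset.mem_univ m)
  have hex : ∀ j : Fin d, ∃ m, D j m * C m j ≠ 0 := by
    intro j
    by_contra hc
    push_neg at hc
    have : ∑ m, D j m * C m j = 0 := Finset.sum_eq_zero fun m _ => hc m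
    rw [hdiag j] at this
    norm_num at this
  choose m hm using hex
  have hpos : ∀ j, 0 < D j (m j) ∧ 0 < C (m j) j := by
    intro j
    have h1 := (hDb j (m j)).1
    have h2 := (hCb (m j) j).1
    constructor
    · rcases lt_or_eq_of_le h1 with h | h
      · exact h
      · exact absurd (by rw [← h, zero_mul]) (hm j)
    · rcases lt_or_eq_of_le h2 with h | h
      · exact h
      · exact absurd (by rw [← h, mul_zero]) (hm j)
  have hDzero : ∀ k j, k ≠ j → D k (m j) = 0 := by
    intro k j hkj
    have := hoff k j hkj (m j)
    rcases mul_eq_zero.mp this with h | h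
    · exact h
    · exact absurd h (ne_of_gt (hpos j).2)
  have hinj : Function.Injective m := by
    intro j j' hjj'
    by_contra hne
    have := hDzero j j' hne
    rw [← hjj'] at this
    exact (hpos j).1.ne' this
  have hbij : Function.Bijective m := (Finite.injective_iff_bijective).mp hinj
  have hCzero : ∀ i j, i ≠ m j → C i j = 0 := by
    intro i j hij
    obtain ⟨j', hj'⟩ := hbij.2 i
    have hne : j' ≠ j := fun hc => hij (hc ▸ hj').symm
    have := hoff j' j hne (m j')
    rw [hj'] at this
    rcases mul_eq_zero.mp this with h | h
    · exact absurd (hj' ▸ h) (ne_of_gt (hpos j').1)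
    · exact h
  have hCdiag : ∀ j, C (m j) j = 1 := by
    intro j
    have hsum : ∑ mm, D j mm * C mm j = 1 := hdiag j
    rw [Finset.sum_eq_single (m j)] at hsum
    · have ha := (hpos j).1
      have hb := (hpos j).2
      have ha1 := (hDb j (m j)).2
      have hb1 := (hCb (m j) j).2
      nlinarith
    · intro k _ hk
      rw [hCzero k j hk, mul_zero]
    · simp
  exact ⟨Equiv.ofBijective m hbij, fun i j => by
    by_cases hij : m j = i
    · rw [if_pos (by simpa [Equiv.ofBijective] using hij), ← hij, hCdiag]
    · rw [if_neg (by simpa [Equiv.ofBijective] using hij), hCzero i j (fun hc => hij hc.symm)]⟩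

lemma det_map_ne {d : ℕ} {R : Matrix (Fin d) (Fin d) ℤ} (hR : R.det ≠ 0) :
    (R.map (Int.cast : ℤ → ℝ)).det ≠ 0 := by
  have h : ((R.det : ℤ) : ℝ) = (R.map (Int.cast : ℤ → ℝ)).det :=
    RingHom.map_det (Int.castRingHom ℝ) R
  rw [← h]
  exact_mod_cast hR

lemma mul_mulVec_image {d : ℕ} (M N : Matrix (Fin d) (Fin d) ℝ) (s : Set (Fin d → ℝ)) :
    (M * N).mulVec '' s = M.mulVec '' (N.mulVec '' s) := by
  rw [Set.image_image]
  simp only [Matrix.mulVec_mulVec]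


/-- `P Bᵀ A R` unitriangular for some permutation matrix `P` and nonsingular integer `R`
iff `B[0,1)^d = A⁻ᵀ R⁻¹ G [0,1)^d` for some nonsingular integer `R` and unitriangular `G`. -/
theorem stmt8 (d : ℕ) (hd : 1 ≤ d) (A B : Matrix (Fin d) (Fin d) ℝ)
    (hA : A.det ≠ 0) (hB : B.det ≠ 0) :
    (∃ (P : Matrix (Fin d) (Fin d) ℝ) (R : Matrix (Fin d) (Fin d) ℤ),
        IsPermMatrix P ∧ R.det ≠ 0 ∧
        IsUnitriangular (P * Bᵀ * A * R.map (Int.cast : ℤ → ℝ))) ↔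
    (∃ (R : Matrix (Fin d) (Fin d) ℤ) (G : Matrix (Fin d) (Fin d) ℝ),
        R.det ≠ 0 ∧ IsUnitriangular G ∧
        B.mulVec '' cube d =
          ((A⁻¹)ᵀ * (R.map (Int.cast : ℤ → ℝ))⁻¹ * G).mulVec '' cube d) := by
  constructor
  · rintro ⟨P, Rt, ⟨σ, hP⟩, hRt, hU⟩
    set Rtr := Rt.map (Int.cast : ℤ → ℝ) with hRtr
    have hRtrd : Rtr.det ≠ 0 := det_map_ne hRt
    refine ⟨Rtᵀ, (P * Bᵀ * A * Rtr)ᵀ, by rwa [Matrix.det_transpose], hU.transpose, ?_⟩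
    have hmap : Rtᵀ.map (Int.cast : ℤ → ℝ) = Rtrᵀ := Matrix.transpose_map
    rw [hmap]
    have e1 : (Rtrᵀ)⁻¹ * Rtrᵀ = 1 :=
      Matrix.nonsing_inv_mul _ (isUnit_iff_ne_zero.mpr (by rwa [Matrix.det_transpose]))
    have e2 : (A⁻¹)ᵀ * Aᵀ = 1 := by
      rw [← Matrix.transpose_mul, Matrix.mul_nonsing_inv A (isUnit_iff_ne_zero.mpr hA),
        Matrix.transpose_one]
    have e3 : Pᵀ * P = 1 := permMatrix_transpose_mul hP
    have hident : (A⁻¹)ᵀ * (Rtrᵀ)⁻¹ * (P * Bᵀ * A * Rtr)ᵀ * P = B := by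
      calc (A⁻¹)ᵀ * (Rtrᵀ)⁻¹ * (P * Bᵀ * A * Rtr)ᵀ * P
          = (A⁻¹)ᵀ * ((Rtrᵀ)⁻¹ * (Rtrᵀ * (Aᵀ * (B * (Pᵀ * P))))) := by
            simp only [Matrix.transpose_mul, Matrix.transpose_transpose, Matrix.mul_assoc]
        _ = B := by
            rw [← Matrix.mul_assoc (Rtrᵀ)⁻¹ Rtrᵀ, e1, Matrix.one_mul, e3, Matrix.mul_one,
              ← Matrix.mul_assoc, e2, Matrix.one_mul]
    conv_lhs => rw [← hident]
    rw [mul_mulVec_image, permMatrix_image_cube hP]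
  · rintro ⟨R, G, hR, hG, himg⟩
    set Rr := R.map (Int.cast : ℤ → ℝ) with hRr
    have hRrd : Rr.det ≠ 0 := det_map_ne hR
    set M := (A⁻¹)ᵀ * Rr⁻¹ * G with hM
    have hMd : M.det ≠ 0 := by
      rw [hM, Matrix.det_mul, Matrix.det_mul, Matrix.det_transpose, Matrix.det_nonsing_inv,
        Matrix.det_nonsing_inv, hG.det_eq_one, mul_one, Ring.inverse_eq_inv, Ring.inverse_eq_inv]
      exact mul_ne_zero (inv_ne_zero hA) (inv_ne_zero hRrd)
    have hMu : IsUnit M.det := isUnit_iff_ne_zero.mpr hMd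
    set C := M⁻¹ * B with hC
    have hCd : C.det ≠ 0 := by
      rw [hC, Matrix.det_mul, Matrix.det_nonsing_inv, Ring.inverse_eq_inv]
      exact mul_ne_zero (inv_ne_zero hMd) hB
    have hCc : C.mulVec '' cube d = cube d := by
      rw [hC, mul_mulVec_image, himg, ← mul_mulVec_image, Matrix.nonsing_inv_mul M hMu]
      have h1 : (1 : Matrix (Fin d) (Fin d) ℝ).mulVec = id := funext Matrix.one_mulVec
      rw [h1, Set.image_id]
    obtain ⟨σ, hσ⟩ := perm_of_cube_eq hCd hCc
    have hBMC : B = M * C := by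
      rw [hC, ← Matrix.mul_assoc, Matrix.mul_nonsing_inv M hMu, Matrix.one_mul]
    refine ⟨C, Rᵀ, ⟨σ, hσ⟩, by rwa [Matrix.det_transpose], ?_⟩
    have hmapT : Rᵀ.map (Int.cast : ℤ → ℝ) = Rrᵀ := Matrix.transpose_map
    rw [hmapT]
    have e1 : (Rrᵀ)⁻¹ * Rrᵀ = 1 :=
      Matrix.nonsing_inv_mul _ (isUnit_iff_ne_zero.mpr (by rwa [Matrix.det_transpose]))
    have e2 : A⁻¹ * A = 1 := Matrix.nonsing_inv_mul A (isUnit_iff_ne_zero.mpr hA)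
    have e3 : C * Cᵀ = 1 := permMatrix_mul_transpose hσ
    have key : C * Bᵀ * A * Rrᵀ = Gᵀ := by
      rw [hBMC, hM]
      calc C * (((A⁻¹)ᵀ * Rr⁻¹ * G) * C)ᵀ * A * Rrᵀ
          = (C * Cᵀ) * (Gᵀ * ((Rrᵀ)⁻¹ * ((A⁻¹ * A) * Rrᵀ))) := by
            simp only [Matrix.transpose_mul, Matrix.transpose_transpose,
              Matrix.transpose_nonsing_inv, Matrix.mul_assoc]
        _ = Gᵀ := by
            rw [e2, Matrix.one_mul, e1, Matrix.mul_one, e3, Matrix.one_mul]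
    rw [key]
    exact hG.transpose


end
end

section
/- (Keller's theorem) Let d ≥ 1 and let Φ ⊆ ℝ^d be such that ([0,1)^d, Φ) is a tiling of ℝ^d. Then for every pair of distinct elements φ, φ' ∈ Φ, the difference φ − φ' has at least one coordinate that is a nonzero integer. -/
open MeasureTheory
open scoped ENNReal

noncomputable section

/-! ### Auxiliary lemmas for Keller's theorem -/

lemma mem_cube_iff {d : ℕ} (x χ : Fin d → ℝ) :
    x - χ ∈ cube d ↔ ∀ j, χ j ≤ x j ∧ x j < χ j + 1 := by
  simp only [cube, Set.mem_setOf_eq, Pi.sub_apply]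
  constructor
  · intro H j
    obtain ⟨h1, h2⟩ := H j
    constructor <;> linarith
  · intro H j
    obtain ⟨h1, h2⟩ := H j
    constructor <;> linarith

/-- In a family of half-open unit intervals partitioning `ℝ`, the successor of a left endpoint
is also a left endpoint. -/
lemma succ_mem (A : Set ℝ) (hA : ∀ x : ℝ, ∃! a, a ∈ A ∧ a ≤ x ∧ x < a + 1)
    {a : ℝ} (ha : a ∈ A) : a + 1 ∈ A := by
  obtain ⟨c, ⟨hcA, hc1, hc2⟩, _⟩ := hA (a + 1)
  rcases eq_or_lt_of_le hc1 with hEq | hLt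
  · rwa [← hEq]
  · exfalso
    have hca : a < c := by linarith
    obtain ⟨u, _, hu⟩ := hA c
    have h1 : a = u := hu a ⟨ha, le_of_lt hca, by linarith⟩
    have h2 : c = u := hu c ⟨hcA, le_refl c, by linarith⟩
    have : a = c := h1.trans h2.symm
    linarith

lemma add_nat_mem (A : Set ℝ) (hA : ∀ x : ℝ, ∃! a, a ∈ A ∧ a ≤ x ∧ x < a + 1)
    {a : ℝ} (ha : a ∈ A) : ∀ n : ℕ, a + (n : ℝ) ∈ A := by
  intro n
  induction n with
  | zero => simpa using ha
  | succ k ih =>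
    have h := succ_mem A hA ih
    have heq : a + ((k + 1 : ℕ) : ℝ) = a + (k : ℝ) + 1 := by push_cast; ring
    rw [heq]
    exact h

lemma oneDim_nat (A : Set ℝ) (hA : ∀ x : ℝ, ∃! a, a ∈ A ∧ a ≤ x ∧ x < a + 1)
    {a b : ℝ} (ha : a ∈ A) (hb : b ∈ A) (hab : a ≤ b) : ∃ n : ℕ, b = a + n := by
  have h0 : (0 : ℤ) ≤ ⌊b - a⌋ := Int.floor_nonneg.mpr (by linarith)
  set n : ℕ := ⌊b - a⌋.toNat with hn
  have hcast : ((n : ℝ)) = ((⌊b - a⌋ : ℤ) : ℝ) := by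
    rw [hn]
    exact_mod_cast congrArg (fun z : ℤ => (z : ℝ)) (Int.toNat_of_nonneg h0)
  have hf1 : ((⌊b - a⌋ : ℤ) : ℝ) ≤ b - a := Int.floor_le _
  have hf2 : b - a < ((⌊b - a⌋ : ℤ) : ℝ) + 1 := Int.lt_floor_add_one _
  have hmem : a + (n : ℝ) ∈ A := add_nat_mem A hA ha n
  obtain ⟨u, _, hu⟩ := hA b
  have h1 : b = u := hu b ⟨hb, le_refl b, by linarith⟩
  have h2 : a + (n : ℝ) = u := hu (a + (n : ℝ)) ⟨hmem, by rw [hcast]; linarith, by rw [hcast]; linarith⟩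
  exact ⟨n, h1.trans h2.symm⟩

lemma oneDim_int (A : Set ℝ) (hA : ∀ x : ℝ, ∃! a, a ∈ A ∧ a ≤ x ∧ x < a + 1)
    {a b : ℝ} (ha : a ∈ A) (hb : b ∈ A) : ∃ n : ℤ, b - a = n := by
  rcases le_total a b with hab | hab
  · obtain ⟨n, hn⟩ := oneDim_nat A hA ha hb hab
    exact ⟨n, by rw [hn]; push_cast; ring⟩
  · obtain ⟨n, hn⟩ := oneDim_nat A hA hb ha hab
    exact ⟨-n, by rw [hn]; push_cast; ring⟩

/-- The line lemma: two cubes of a tiling meeting a common line in direction `i`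
have `i`-th coordinates differing by an integer. -/
lemma line_int {d : ℕ} {Φ : Set (Fin d → ℝ)} (h : IsTiling (cube d) Φ) (i : Fin d)
    (y : Fin d → ℝ) {φ ψ : Fin d → ℝ} (hφ : φ ∈ Φ) (hψ : ψ ∈ Φ)
    (hφy : ∀ j, j ≠ i → φ j ≤ y j ∧ y j < φ j + 1)
    (hψy : ∀ j, j ≠ i → ψ j ≤ y j ∧ y j < ψ j + 1) :
    ∃ n : ℤ, ψ i - φ i = n := by
  set A : Set ℝ :=
    {a | ∃ χ, χ ∈ Φ ∧ (∀ j, j ≠ i → χ j ≤ y j ∧ y j < χ j + 1) ∧ χ i = a} with hAdef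
  have hA : ∀ s : ℝ, ∃! a, a ∈ A ∧ a ≤ s ∧ s < a + 1 := by
    intro s
    obtain ⟨χ, ⟨hχΦ, hχc⟩, hu⟩ := h (Function.update y i s)
    rw [mem_cube_iff] at hχc
    have hline : ∀ j, j ≠ i → χ j ≤ y j ∧ y j < χ j + 1 := by
      intro j hj
      have := hχc j
      rwa [Function.update_of_ne hj] at this
    have hi : χ i ≤ s ∧ s < χ i + 1 := by
      have := hχc i
      rwa [Function.update_self] at this
    refine ⟨χ i, ⟨⟨χ, hχΦ, hline, rfl⟩, hi.1, hi.2⟩, ?_⟩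
    rintro a ⟨⟨χ', hχ'Φ, hχ'line, rfl⟩, ha1, ha2⟩
    have hχ'c : Function.update y i s - χ' ∈ cube d := by
      rw [mem_cube_iff]
      intro j
      by_cases hj : j = i
      · subst hj
        rw [Function.update_self]
        exact ⟨ha1, ha2⟩
      · rw [Function.update_of_ne hj]
        exact hχ'line j hj
    have := hu χ' ⟨hχ'Φ, hχ'c⟩
    rw [this]
  have haφ : φ i ∈ A := ⟨φ, hφ, hφy, rfl⟩
  have haψ : ψ i ∈ A := ⟨ψ, hψ, hψy, rfl⟩
  exact oneDim_int A hA haφ haψ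

/-- Shifting a full residue class (mod 1 in coordinate `i`) of a cube tiling along
coordinate `i` preserves the tiling property. -/
lemma shift_tiling {d : ℕ} {Φ : Set (Fin d → ℝ)} (h : IsTiling (cube d) Φ)
    (i : Fin d) (α t : ℝ) :
    IsTiling (cube d)
      {χ | (χ ∈ Φ ∧ ¬ (∃ n : ℤ, χ i - α = n)) ∨
        ∃ ψ, ψ ∈ Φ ∧ (∃ n : ℤ, ψ i - α = n) ∧ χ = Function.update ψ i (ψ i + t)} := by
  intro x
  set x' : Fin d → ℝ := Function.update x i (x i - t) with hx'def
  obtain ⟨ψ, ⟨hψΦ, hψx⟩, huψ⟩ := h x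
  obtain ⟨ψ', ⟨hψ'Φ, hψ'x'⟩, huψ'⟩ := h x'
  rw [mem_cube_iff] at hψx hψ'x'
  -- lines: `x` and `x'` agree off coordinate `i`
  have hxx' : ∀ j, j ≠ i → x' j = x j := fun j hj => Function.update_of_ne hj _ _
  have hψline : ∀ j, j ≠ i → ψ j ≤ x j ∧ x j < ψ j + 1 := fun j _ => hψx j
  have hψ'line : ∀ j, j ≠ i → ψ' j ≤ x j ∧ x j < ψ' j + 1 := by
    intro j hj
    have := hψ'x' j
    rwa [hxx' j hj] at this
  -- covering by a shifted cube means the original cube covers x'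
  have cover_shift : ∀ ρ : Fin d → ℝ, x - Function.update ρ i (ρ i + t) ∈ cube d →
      x' - ρ ∈ cube d := by
    intro ρ hρ
    rw [mem_cube_iff] at hρ ⊢
    intro j
    by_cases hj : j = i
    · subst hj
      have := hρ j
      rw [Function.update_self] at this
      rw [hx'def, Function.update_self]
      constructor <;> linarith [this.1, this.2]
    · have := hρ j
      rw [Function.update_of_ne hj] at this
      rwa [hxx' j hj]
  by_cases hc : ∃ n : ℤ, ψ i - α = n
  · -- the class of the line is shifted
    have hψ'c : ∃ n : ℤ, ψ' i - α = n := by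
      obtain ⟨m, hm⟩ := line_int h i x hψΦ hψ'Φ hψline hψ'line
      obtain ⟨n, hn⟩ := hc
      exact ⟨m + n, by push_cast; linarith⟩
    refine ⟨Function.update ψ' i (ψ' i + t), ⟨Or.inr ⟨ψ', hψ'Φ, hψ'c, rfl⟩, ?_⟩, ?_⟩
    · rw [mem_cube_iff]
      intro j
      by_cases hj : j = i
      · subst hj
        rw [Function.update_self]
        have := hψ'x' j
        rw [hx'def, Function.update_self] at this
        constructor <;> linarith [this.1, this.2]
      · rw [Function.update_of_ne hj]
        exact hψ'line j hj
    · rintro χ ⟨(⟨hχΦ, hχnc⟩ | ⟨ρ, hρΦ, hρc, rfl⟩), hχx⟩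
      · exfalso
        rw [mem_cube_iff] at hχx
        obtain ⟨m, hm⟩ := line_int h i x hψΦ hχΦ hψline (fun j _ => hχx j)
        obtain ⟨n, hn⟩ := hc
        exact hχnc ⟨m + n, by push_cast; linarith⟩
      · have := huψ' ρ ⟨hρΦ, cover_shift ρ hχx⟩
        rw [this]
  · -- the class of the line is not shifted
    refine ⟨ψ, ⟨Or.inl ⟨hψΦ, hc⟩, (mem_cube_iff x ψ).2 hψx⟩, ?_⟩
    rintro χ ⟨(⟨hχΦ, _⟩ | ⟨ρ, hρΦ, hρc, rfl⟩), hχx⟩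
    · exact huψ χ ⟨hχΦ, hχx⟩
    · exfalso
      have hρx' := cover_shift ρ hχx
      rw [mem_cube_iff] at hρx'
      have hρline : ∀ j, j ≠ i → ρ j ≤ x j ∧ x j < ρ j + 1 := by
        intro j hj
        have := hρx' j
        rwa [hxx' j hj] at this
      obtain ⟨m, hm⟩ := line_int h i x hρΦ hψΦ hρline hψline
      obtain ⟨n, hn⟩ := hρc
      exact hc ⟨m + n, by push_cast; linarith⟩

/-- Main induction: if no coordinate of `φ - φ'` is a nonzero integer, then `φ = φ'`. -/
lemma keller_ind {d : ℕ} : ∀ (n : ℕ) (Φ : Set (Fin d → ℝ)), IsTiling (cube d) Φ →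
    ∀ φ, φ ∈ Φ → ∀ φ', φ' ∈ Φ →
    (∀ i : Fin d, ∀ m : ℤ, φ i - φ' i = m → m = 0) →
    (Finset.univ.filter fun i => φ i ≠ φ' i).card ≤ n → φ = φ' := by
  intro n
  induction n with
  | zero =>
    intro Φ h φ hφ φ' hφ' hint hcard
    funext j
    by_contra hj
    have : j ∈ Finset.univ.filter fun i => φ i ≠ φ' i := by
      simp [hj]
    have := Finset.card_pos.mpr ⟨j, this⟩
    omega
  | succ n IH =>
    intro Φ h φ hφ φ' hφ' hint hcard
    by_cases hne : ∀ j, φ j = φ' j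
    · exact funext hne
    push_neg at hne
    obtain ⟨i, hi⟩ := hne
    have hNotInt : ¬ ∃ m : ℤ, φ i - φ' i = m := by
      rintro ⟨m, hm⟩
      have := hint i m hm
      rw [this] at hm
      simp at hm
      exact hi (by linarith)
    set t : ℝ := φ' i - φ i with ht
    set φ'' : Fin d → ℝ := Function.update φ i (φ i + t) with hφ''
    have h' := shift_tiling h i (φ i) t
    set Φ' : Set (Fin d → ℝ) :=
      {χ | (χ ∈ Φ ∧ ¬ (∃ n : ℤ, χ i - φ i = n)) ∨
        ∃ ψ, ψ ∈ Φ ∧ (∃ n : ℤ, ψ i - φ i = n) ∧ χ = Function.update ψ i (ψ i + t)} with hΦ'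
    have hφ''mem : φ'' ∈ Φ' := Or.inr ⟨φ, hφ, ⟨0, by simp⟩, rfl⟩
    have hφ'mem : φ' ∈ Φ' := by
      refine Or.inl ⟨hφ', ?_⟩
      rintro ⟨m, hm⟩
      exact hNotInt ⟨-m, by push_cast; linarith⟩
    -- coordinates of φ''
    have hφ''i : φ'' i = φ' i := by
      rw [hφ'', Function.update_self]; ring
    have hφ''j : ∀ j, j ≠ i → φ'' j = φ j := by
      intro j hj
      rw [hφ'', Function.update_of_ne hj]
    have hint' : ∀ j : Fin d, ∀ m : ℤ, φ'' j - φ' j = m → m = 0 := by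
      intro j m hm
      by_cases hj : j = i
      · subst hj
        rw [hφ''i] at hm
        have : (m : ℝ) = 0 := by linarith
        exact_mod_cast this
      · rw [hφ''j j hj] at hm
        exact hint j m hm
    have hsub : (Finset.univ.filter fun j => φ'' j ≠ φ' j) ⊆
        (Finset.univ.filter fun j => φ j ≠ φ' j).erase i := by
      intro j hj
      simp only [Finset.mem_filter, Finset.mem_univ, true_and] at hj
      have hji : j ≠ i := by
        intro hji
        subst hji
        exact hj (by rw [hφ''i])
      refine Finset.mem_erase.mpr ⟨hji, ?_⟩
      simp only [Finset.mem_filter, Finset.mem_univ, true_and]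
      rwa [hφ''j j hji] at hj
    have hicard : i ∈ Finset.univ.filter fun j => φ j ≠ φ' j := by simp [hi]
    have hcard' : (Finset.univ.filter fun j => φ'' j ≠ φ' j).card ≤ n := by
      have h1 := Finset.card_le_card hsub
      have h2 := Finset.card_erase_of_mem hicard
      omega
    have heq : φ'' = φ' := IH Φ' h' φ'' hφ''mem φ' hφ'mem hint' hcard'
    -- now φ and φ' agree off coordinate i; apply the line lemma
    have hoff : ∀ j, j ≠ i → φ j = φ' j := by
      intro j hj
      rw [← hφ''j j hj, heq]
    exfalso
    apply hNotInt
    obtain ⟨m, hm⟩ := line_int h i φ hφ' hφ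
      (fun j hj => by rw [← hoff j hj]; constructor <;> linarith)
      (fun j _ => ⟨le_refl _, by linarith⟩)
    exact ⟨m, hm⟩

/-- Keller's theorem: in a cube tiling, the difference of any two distinct translation vectors
has a nonzero integer coordinate. -/
theorem stmt10 (d : ℕ) (hd : 1 ≤ d) (Φ : Set (Fin d → ℝ)) (h : IsTiling (cube d) Φ) :
    ∀ φ ∈ Φ, ∀ φ' ∈ Φ, φ ≠ φ' →
      ∃ i : Fin d, ∃ n : ℤ, n ≠ 0 ∧ φ i - φ' i = (n : ℝ) := by
  intro φ hφ φ' hφ' hne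
  by_contra hcon
  push_neg at hcon
  have hint : ∀ i : Fin d, ∀ m : ℤ, φ i - φ' i = m → m = 0 := by
    intro i m hm
    by_contra hm0
    exact hcon i m hm0 hm
  have hcard : (Finset.univ.filter fun i => φ i ≠ φ' i).card ≤ d := by
    calc (Finset.univ.filter fun i => φ i ≠ φ' i).card
        ≤ (Finset.univ : Finset (Fin d)).card := Finset.card_filter_le _ _
      _ = d := by simp
  exact hne (keller_ind d Φ h φ hφ φ' hφ' hint hcard)

end
end
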